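/- arXiv:math/0506082 — 2 statements merged into one kernel-verified Lean document; each statement's English description precedes it below -/
import Mathlib

section
/- The map s mod σ^N ↦ (s mod σ, D(s)) from T[B] = S/σ^N to B × {e/x_1, …, e/x_N}, where B = S/σ, is a well-defined bijection. In particular, the fiber of the natural projection π : T[B] → B over each flat tile has exactly N elements. -/
structure Slant (N : ℕ) where
  a : Fin N → ℤ
  ρ : Equiv.Perm (Fin N)

def Slant.shift {N : ℕ} [NeZero N] (s : Slant N) : Slant N :=
  ⟨s.a + Pi.single (s.ρ 0) 1, (finRotate N).trans s.ρ⟩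

/-- Gradient `D(s) = e − e_{ρ(N)}`. -/
def Slant.grad {n : ℕ} (s : Slant (n + 1)) : Fin (n + 1) → ℤ :=
  (fun _ => 1) - Pi.single (s.ρ (Fin.last n)) 1

/-- `s ~ s'` mod `σ` : `s' = σ^k(s)` for some `k ∈ ℤ`. -/
def relσ (n : ℕ) (s s' : Slant (n + 1)) : Prop :=
  ∃ k : ℕ, Slant.shift^[k] s = s' ∨ Slant.shift^[k] s' = s

/-- `s ~ s'` mod `σ^N` : `s' = σ^{Nk}(s)` for some `k ∈ ℤ`. -/
def relσN (n : ℕ) (s s' : Slant (n + 1)) : Prop :=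
  ∃ k : ℕ, Slant.shift^[(n + 1) * k] s = s' ∨ Slant.shift^[(n + 1) * k] s' = s

/-- The set `{e/x_1, …, e/x_N}` of possible gradient values. -/
def gradVals (n : ℕ) : Set (Fin (n + 1) → ℤ) :=
  Set.range (fun i : Fin (n + 1) => (fun _ => 1) - Pi.single i (1 : ℤ))

/- ### Auxiliary lemmas -/

open Fin.NatCast Fin.CommRing

lemma Slant.shift_iter_rho {n : ℕ} (k : ℕ) (s : Slant (n + 1)) (i : Fin (n + 1)) :
    (Slant.shift^[k] s).ρ i = s.ρ (i + (k : Fin (n + 1))) := by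
  induction k generalizing s with
  | zero => simp
  | succ k ih =>
    rw [Function.iterate_succ_apply, ih]
    show s.ρ ((finRotate (n + 1)) (i + (k : Fin (n + 1)))) = _
    rw [finRotate_succ_apply]
    congr 1
    push_cast
    ring

lemma Slant.shift_injective {n : ℕ} :
    Function.Injective (Slant.shift : Slant (n + 1) → Slant (n + 1)) := by
  rintro ⟨a, ρ⟩ ⟨a', ρ'⟩ h
  simp only [Slant.shift, Slant.mk.injEq] at h
  obtain ⟨h1, h2⟩ := h
  have hρ : ρ = ρ' := by
    have := congrArg (fun e => (finRotate (n + 1)).symm.trans e) h2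
    simpa [← Equiv.trans_assoc] using this
  subst hρ
  rw [add_right_cancel h1]

lemma equiv_of_iter {α : Type*} {f : α → α} (hf : Function.Injective f) (m : ℕ) :
    Equivalence (fun s s' => ∃ k : ℕ, f^[m * k] s = s' ∨ f^[m * k] s' = s) := by
  have hiter : ∀ p : ℕ, Function.Injective (f^[p]) := fun p => hf.iterate p
  constructor
  · intro s; exact ⟨0, Or.inl (by simp)⟩
  · rintro s s' ⟨k, h | h⟩
    exacts [⟨k, Or.inr h⟩, ⟨k, Or.inl h⟩]
  · rintro a b c ⟨k, hk⟩ ⟨j, hj⟩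
    rcases hk with hk | hk <;> rcases hj with hj | hj
    · refine ⟨j + k, Or.inl ?_⟩
      rw [Nat.mul_add, Function.iterate_add_apply, hk, hj]
    · rcases le_total k j with h | h
      · refine ⟨j - k, Or.inr ?_⟩
        refine hiter (m * k) ?_
        rw [← Function.iterate_add_apply, ← Nat.mul_add,
          Nat.add_sub_cancel' h, hj, hk]
      · refine ⟨k - j, Or.inl ?_⟩
        refine hiter (m * j) ?_
        rw [← Function.iterate_add_apply, ← Nat.mul_add,
          Nat.add_sub_cancel' h, hk, hj]
    · rcases le_total k j with h | h
      · refine ⟨j - k, Or.inl ?_⟩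
        rw [← hj, ← hk, ← Function.iterate_add_apply, ← Nat.mul_add,
          Nat.sub_add_cancel h]
      · refine ⟨k - j, Or.inr ?_⟩
        rw [← hj, ← hk, ← Function.iterate_add_apply, ← Nat.mul_add,
          Nat.sub_add_cancel h]
    · refine ⟨k + j, Or.inr ?_⟩
      rw [Nat.mul_add, Function.iterate_add_apply, hj, hk]

lemma relσ_equivalence (n : ℕ) : Equivalence (relσ n) := by
  have h := equiv_of_iter (Slant.shift_injective (n := n)) 1
  simp only [one_mul] at h
  exact h

lemma relσN_equivalence (n : ℕ) : Equivalence (relσN n) :=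
  equiv_of_iter (Slant.shift_injective (n := n)) (n + 1)

lemma gradMap_injective (n : ℕ) :
    Function.Injective
      (fun i : Fin (n + 1) => ((fun _ => 1) - Pi.single i (1 : ℤ) : Fin (n + 1) → ℤ)) := by
  intro i j h
  by_contra hne
  have := congrFun h i
  simp [Pi.single_apply, Ne.symm hne] at this

/-- The map `s mod σ^N ↦ (s mod σ, D(s))` is a well-defined bijection from
`T[B] = S/σ^N` onto `B × {e/x_1,…,e/x_N}`; in particular every fiber of the natural
projection `π : T[B] → B` has exactly `N` elements. -/
theorem tangent_bundle_bijection (n : ℕ) :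
    (∃ F : Quot (relσN n) → Quot (relσ n) × (gradVals n),
      (∀ s : Slant (n + 1),
        F (Quot.mk _ s) = (Quot.mk _ s, ⟨s.grad, ⟨s.ρ (Fin.last n), rfl⟩⟩)) ∧
      Function.Bijective F) ∧
    (∃ π : Quot (relσN n) → Quot (relσ n),
      (∀ s : Slant (n + 1), π (Quot.mk _ s) = Quot.mk _ s) ∧
      ∀ t : Quot (relσ n), Nat.card {u : Quot (relσN n) // π u = t} = n + 1) := by
  classical
  -- gradient is constant on σ^N classes
  have hgrad : ∀ s s' : Slant (n + 1), relσN n s s' → s.grad = s'.grad := by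
    have key : ∀ (k : ℕ) (s : Slant (n + 1)),
        (Slant.shift^[(n + 1) * k] s).grad = s.grad := by
      intro k s
      have h0 : (((n + 1) * k : ℕ) : Fin (n + 1)) = 0 :=
        Fin.natCast_eq_zero.mpr (Dvd.intro k rfl)
      rw [Slant.grad, Slant.grad, Slant.shift_iter_rho, h0, add_zero]
    rintro s s' ⟨k, h | h⟩
    · rw [← h, key]
    · rw [← h, key]
  -- the underlying map
  set g : Slant (n + 1) → Quot (relσ n) × (gradVals n) :=
    fun s => (Quot.mk _ s, ⟨s.grad, ⟨s.ρ (Fin.last n), rfl⟩⟩) with hg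
  have hwd : ∀ s s' : Slant (n + 1), relσN n s s' → g s = g s' := by
    intro s s' h
    refine Prod.ext (Quot.sound ?_) (Subtype.ext (hgrad s s' h))
    obtain ⟨k, hk⟩ := h
    exact ⟨(n + 1) * k, hk⟩
  set F : Quot (relσN n) → Quot (relσ n) × (gradVals n) := Quot.lift g hwd with hF
  have hFmk : ∀ s : Slant (n + 1), F (Quot.mk _ s) = g s := fun s => rfl
  -- injectivity
  have hFinj : Function.Injective F := by
    intro u v h
    obtain ⟨s⟩ := u
    obtain ⟨s'⟩ := v
    rw [hFmk, hFmk, hg] at h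
    have h1 : Quot.mk (relσ n) s = Quot.mk (relσ n) s' := congrArg Prod.fst h
    have h2 : s.grad = s'.grad := congrArg (fun p => (p.2 : Fin (n + 1) → ℤ)) h
    have hρ : s.ρ (Fin.last n) = s'.ρ (Fin.last n) := gradMap_injective n h2
    have hrel : relσ n s s' := ((relσ_equivalence n).eqvGen_iff).mp (Quot.eq.mp h1)
    obtain ⟨k, hk | hk⟩ := hrel
    · have h3 : s.ρ (Fin.last n + (k : Fin (n + 1))) = s.ρ (Fin.last n) := by
        rw [← Slant.shift_iter_rho, hk, ← hρ]
      have h5 : ((k : ℕ) : Fin (n + 1)) = 0 := add_eq_left.mp (s.ρ.injective h3)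
      obtain ⟨m, hm⟩ := Fin.natCast_eq_zero.mp h5
      exact Quot.sound ⟨m, Or.inl (hm ▸ hk)⟩
    · have h3 : s'.ρ (Fin.last n + (k : Fin (n + 1))) = s'.ρ (Fin.last n) := by
        rw [← Slant.shift_iter_rho, hk, hρ]
      have h5 : ((k : ℕ) : Fin (n + 1)) = 0 := add_eq_left.mp (s'.ρ.injective h3)
      obtain ⟨m, hm⟩ := Fin.natCast_eq_zero.mp h5
      exact Quot.sound ⟨m, Or.inr (hm ▸ hk)⟩
  -- surjectivity
  have hFsurj : Function.Surjective F := by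
    rintro ⟨b, v, i, hi⟩
    obtain ⟨s⟩ := b
    set k : ℕ := (s.ρ.symm i - Fin.last n).val with hk
    refine ⟨Quot.mk _ (Slant.shift^[k] s), ?_⟩
    rw [hFmk, hg]
    refine Prod.ext (Quot.sound ⟨k, Or.inr rfl⟩) (Subtype.ext ?_)
    show (Slant.shift^[k] s).grad = v
    have hlast : Fin.last n + ((k : ℕ) : Fin (n + 1)) = s.ρ.symm i := by
      rw [hk, Fin.cast_val_eq_self]; ring
    rw [Slant.grad, Slant.shift_iter_rho, hlast, Equiv.apply_symm_apply]
    exact hi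
  have hFbij : Function.Bijective F := ⟨hFinj, hFsurj⟩
  refine ⟨⟨F, fun s => rfl, hFbij⟩,
    ⟨fun u => (F u).1, fun s => congrArg Prod.fst (hFmk s), ?_⟩⟩
  intro t
  have e1 : {u : Quot (relσN n) // (F u).1 = t} ≃
      {p : Quot (relσ n) × (gradVals n) // p.1 = t} :=
    (Equiv.ofBijective F hFbij).subtypeEquiv (fun u => Iff.rfl)
  have e2 : {p : Quot (relσ n) × (gradVals n) // p.1 = t} ≃ (gradVals n) :=
    { toFun := fun p => p.1.2
      invFun := fun b => ⟨(t, b), rfl⟩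
      left_inv := by rintro ⟨⟨a, b⟩, rfl⟩; rfl
      right_inv := fun b => rfl }
  rw [Nat.card_congr (e1.trans e2)]
  have h : Nat.card ↑(gradVals n) = Nat.card (Fin (n + 1)) :=
    Nat.card_range_of_injective (gradMap_injective n)
  rw [h, Nat.card_eq_fintype_card, Fintype.card_fin]
end

section
/- For a slant N-hedron s = a[x_{ρ(1)},…,x_{ρ(N-1)}], define s_D = (a+e_{ρ(1)})[x_{ρ(2)},…,x_{ρ(N-1)}, x_{ρ(1)}]. Then D(s_D) = D(s), and the simplices s and s_D intersect exactly in a common facet, namely the (N-2)-simplex conv{a+e_{ρ(1)}, a+e_{ρ(1)}+e_{ρ(2)}, …, a+e_{ρ(1)}+⋯+e_{ρ(N-1)}}. -/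
noncomputable def Slant.vert {N : ℕ} (s : Slant N) (k : Fin N) : Fin N → ℝ :=
  (fun j => (s.a j : ℝ)) + ∑ i ∈ Finset.Iio k, Pi.single (s.ρ i) 1

noncomputable def Slant.simplex {N : ℕ} (s : Slant N) : Set (Fin N → ℝ) :=
  convexHull ℝ (Set.range s.vert)

/-- `s_D = (a+e_{ρ(1)})[x_{ρ(2)},…,x_{ρ(N-1)},x_{ρ(1)}]` : the base point moves by
`e_{ρ(1)}` and the bracket indices `ρ(1),…,ρ(N-1)` are cyclically permuted, the omitted
index `ρ(N)` staying fixed. -/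
def Slant.sD {n : ℕ} (s : Slant (n + 2)) : Slant (n + 2) :=
  ⟨s.a + Pi.single (s.ρ 0) 1,
   (((Equiv.swap (⟨n, by omega⟩ : Fin (n + 2)) (Fin.last (n + 1))).trans
      (finRotate (n + 2)))).trans s.ρ⟩

lemma vert_apply {N : ℕ} (s : Slant N) (k j : Fin N) :
    s.vert k j = (s.a j : ℝ) + if s.ρ.symm j < k then 1 else 0 := by
  unfold Slant.vert
  simp only [Pi.add_apply, Finset.sum_apply]
  congr 1
  rw [Finset.sum_congr rfl (fun i _ => ?_),
    Finset.sum_ite_eq' (Finset.Iio k) (s.ρ.symm j) (fun _ => (1:ℝ))]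
  · simp [Finset.mem_Iio]
  · rw [Pi.single_apply]
    congr 1
    simp only [eq_comm (a := i), Equiv.symm_apply_eq, eq_comm (a := j)]

lemma finRotate_symm {n : ℕ} (m : Fin (n + 2)) :
    (finRotate (n + 2)).symm m = m - 1 := by
  rw [Equiv.symm_apply_eq, finRotate_succ_apply, sub_add_cancel]

lemma sD_symm_apply {n : ℕ} (s : Slant (n + 2)) (j : Fin (n + 2)) :
    s.sD.ρ.symm j =
      Equiv.swap (⟨n, by omega⟩ : Fin (n + 2)) (Fin.last (n + 1)) (s.ρ.symm j - 1) := by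
  show ((((Equiv.swap (⟨n, by omega⟩ : Fin (n + 2)) (Fin.last (n + 1))).trans
      (finRotate (n + 2)))).trans s.ρ).symm j = _
  rw [Equiv.symm_trans_apply, Equiv.symm_trans_apply, finRotate_symm, Equiv.symm_swap]

lemma sD_ρ_last {n : ℕ} (s : Slant (n + 2)) :
    s.sD.ρ (Fin.last (n + 1)) = s.ρ (Fin.last (n + 1)) := by
  show s.ρ (finRotate (n + 2)
      (Equiv.swap (⟨n, by omega⟩ : Fin (n + 2)) (Fin.last (n + 1)) (Fin.last (n + 1)))) = _
  rw [Equiv.swap_apply_right, finRotate_succ_apply]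
  congr 1
  ext
  simp [Fin.val_add, Fin.last]

lemma sD_symm_c {n : ℕ} (s : Slant (n + 2)) :
    s.sD.ρ.symm (s.ρ 0) = (⟨n, by omega⟩ : Fin (n + 2)) := by
  rw [sD_symm_apply, Equiv.symm_apply_apply]
  have h : (0 : Fin (n + 2)) - 1 = Fin.last (n + 1) := by
    ext; simp [Fin.sub_def, Fin.last]
  rw [h, Equiv.swap_apply_right]

lemma vert_c {n : ℕ} (s : Slant (n + 2)) (k : Fin (n + 2)) :
    s.vert k (s.ρ 0) = (s.a (s.ρ 0) : ℝ) + 1 - (if k = 0 then 1 else 0) := by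
  rw [vert_apply, Equiv.symm_apply_apply]
  rcases eq_or_ne k 0 with rfl | h
  · simp
  · rw [if_pos (Fin.pos_iff_ne_zero.mpr h), if_neg h]; ring

lemma sD_vert_c {n : ℕ} (s : Slant (n + 2)) (k : Fin (n + 2)) :
    s.sD.vert k (s.ρ 0) =
      (s.a (s.ρ 0) : ℝ) + 1 + (if k = Fin.last (n + 1) then 1 else 0) := by
  rw [vert_apply, sD_symm_c]
  have ha : (s.sD.a (s.ρ 0) : ℝ) = (s.a (s.ρ 0) : ℝ) + 1 := by
    simp [Slant.sD, Pi.single_apply]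
  rw [ha]
  have hcond : ((⟨n, by omega⟩ : Fin (n + 2)) < k) ↔ k = Fin.last (n + 1) := by
    rw [Fin.lt_def, Fin.ext_iff]
    simp [Fin.last]
    omega
  rcases eq_or_ne k (Fin.last (n + 1)) with rfl | h
  · rw [if_pos (hcond.mpr rfl), if_pos rfl]
  · rw [if_neg (fun hh => h (hcond.mp hh)), if_neg h]

lemma sD_a_apply {n : ℕ} (s : Slant (n + 2)) (j : Fin (n + 2)) :
    (s.sD.a j : ℝ) = (s.a j : ℝ) + (if s.ρ.symm j = 0 then 1 else 0) := by
  have hc : (j = s.ρ 0) ↔ s.ρ.symm j = 0 := by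
    rw [Equiv.symm_apply_eq, eq_comm]
  simp only [Slant.sD, Pi.add_apply, Pi.single_apply]
  rcases eq_or_ne (s.ρ.symm j) 0 with h | h
  · rw [if_pos h, if_pos (hc.mpr h)]; push_cast; ring
  · rw [if_neg h, if_neg (fun hh => h (hc.mp hh))]; push_cast; ring

lemma sD_vert_eq {n : ℕ} (s : Slant (n + 2)) (k : Fin (n + 1)) :
    s.sD.vert k.castSucc = s.vert k.succ := by
  funext j
  rw [vert_apply, vert_apply, sD_a_apply, sD_symm_apply]
  set m := s.ρ.symm j with hm
  have hk : (k.castSucc : ℕ) = k.val := rfl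
  have hks : (k.succ : ℕ) = k.val + 1 := rfl
  have hkn : (k : ℕ) ≤ n := by omega
  rcases eq_or_ne m 0 with h0 | h0
  · rw [h0]
    have h : (0 : Fin (n + 2)) - 1 = Fin.last (n + 1) := by
      ext; simp [Fin.sub_def, Fin.last]
    rw [h, Equiv.swap_apply_right, if_pos rfl]
    have h1 : ¬ ((⟨n, by omega⟩ : Fin (n + 2)) < k.castSucc) := by
      rw [Fin.lt_def]; simp [hk]; omega
    have h2 : (0 : Fin (n + 2)) < k.succ := by
      rw [Fin.lt_def]; simp [hks]
    rw [if_neg h1, if_pos h2]; ring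
  · rw [if_neg h0]
    have hmv : (m - 1 : Fin (n + 2)) = ⟨(m : ℕ) - 1, by omega⟩ := by
      ext
      rw [Fin.coe_sub_one, if_neg h0]
    have hm1 : 1 ≤ (m : ℕ) := by
      rcases Nat.eq_zero_or_pos (m : ℕ) with h | h
      · exact absurd (Fin.ext h) h0
      · exact h
    rcases eq_or_ne m (Fin.last (n + 1)) with hl | hl
    · have : (m - 1 : Fin (n + 2)) = ⟨n, by omega⟩ := by
        rw [hmv]; ext; simp [hl, Fin.last]
      rw [this, Equiv.swap_apply_left]
      have h1 : ¬ (Fin.last (n + 1) < k.castSucc) := by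
        rw [Fin.lt_def]; simp [hk, Fin.last]
      have h2 : ¬ (m < k.succ) := by
        rw [Fin.lt_def, hl]; simp [hks, Fin.last]; omega
      rw [if_neg h1, if_neg h2]; ring
    · have hmn : (m : ℕ) ≤ n := by
        have := m.isLt
        rcases Nat.lt_or_ge (m : ℕ) (n + 1) with h | h
        · omega
        · exact absurd (Fin.ext (by omega : (m : ℕ) = n + 1)) hl
      have hne1 : (⟨(m : ℕ) - 1, by omega⟩ : Fin (n + 2)) ≠ ⟨n, by omega⟩ :=
        Fin.ne_of_val_ne (by simp; omega)
      have hne2 : (⟨(m : ℕ) - 1, by omega⟩ : Fin (n + 2)) ≠ Fin.last (n + 1) :=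
        Fin.ne_of_val_ne (by simp [Fin.last]; omega)
      rw [hmv, Equiv.swap_apply_of_ne_of_ne hne1 hne2]
      have : ((⟨(m : ℕ) - 1, by omega⟩ : Fin (n + 2)) < k.castSucc) ↔ (m < k.succ) := by
        rw [Fin.lt_def, Fin.lt_def]; simp [hk, hks]; omega
      rcases em (m < k.succ) with h | h
      · rw [if_pos (this.mpr h), if_pos h]; ring
      · rw [if_neg (fun hh => h (this.mp hh)), if_neg h]; ring

/-- `D(s_D) = D(s)`, and `s` and `s_D` intersect exactly in the common facet
`conv{a+e_{ρ(1)}, a+e_{ρ(1)}+e_{ρ(2)}, …, a+e_{ρ(1)}+⋯+e_{ρ(N-1)}}`. -/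
theorem sD_grad_and_common_facet (n : ℕ) (s : Slant (n + 2)) :
    s.sD.grad = s.grad ∧
    s.simplex ∩ s.sD.simplex =
      convexHull ℝ (Set.range fun k : Fin (n + 1) => s.vert k.succ) := by
  constructor
  · rw [Slant.grad, Slant.grad, sD_ρ_last]
  apply Set.Subset.antisymm
  · rintro x ⟨hxV, hxW⟩
    rw [Slant.simplex, convexHull_range_eq_exists_affineCombination] at hxV hxW
    obtain ⟨t, w, hw0, hw1, hxw⟩ := hxV
    obtain ⟨t', v, hv0, hv1, hxv⟩ := hxW
    have hxsum : x = ∑ i ∈ t, w i • s.vert i := by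
      rw [← hxw, Finset.affineCombination_eq_linear_combination _ _ _ hw1]
    have hxsum' : x = ∑ i ∈ t', v i • s.sD.vert i := by
      rw [← hxv, Finset.affineCombination_eq_linear_combination _ _ _ hv1]
    have hxc1 : x (s.ρ 0) = (s.a (s.ρ 0) : ℝ) + 1 - (if 0 ∈ t then w 0 else 0) := by
      rw [hxsum, Finset.sum_apply]
      have : ∀ i ∈ t, (w i • s.vert i) (s.ρ 0)
          = w i * ((s.a (s.ρ 0) : ℝ) + 1) - (if i = 0 then w i else 0) := by
        intro i _
        rw [Pi.smul_apply, smul_eq_mul, vert_c]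
        rcases eq_or_ne i 0 with rfl | h
        · rw [if_pos rfl, if_pos rfl]; ring
        · rw [if_neg h, if_neg h]; ring
      rw [Finset.sum_congr rfl this, Finset.sum_sub_distrib, ← Finset.sum_mul, hw1,
        one_mul, Finset.sum_ite_eq' t 0 w]
    have hxc2 : x (s.ρ 0) = (s.a (s.ρ 0) : ℝ) + 1
        + (if Fin.last (n + 1) ∈ t' then v (Fin.last (n + 1)) else 0) := by
      rw [hxsum', Finset.sum_apply]
      have : ∀ i ∈ t', (v i • s.sD.vert i) (s.ρ 0)
          = v i * ((s.a (s.ρ 0) : ℝ) + 1)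
            + (if i = Fin.last (n + 1) then v i else 0) := by
        intro i _
        rw [Pi.smul_apply, smul_eq_mul, sD_vert_c]
        rcases eq_or_ne i (Fin.last (n + 1)) with rfl | h
        · rw [if_pos rfl, if_pos rfl]; ring
        · rw [if_neg h, if_neg h]; ring
      rw [Finset.sum_congr rfl this, Finset.sum_add_distrib, ← Finset.sum_mul, hv1,
        one_mul, Finset.sum_ite_eq' t' (Fin.last (n + 1)) v]
    have hS0 : (if 0 ∈ t then w 0 else 0) = 0 := by
      have h1 : 0 ≤ (if 0 ∈ t then w 0 else 0) := by
        split
        · exact hw0 _ ‹_›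
        · exact le_refl 0
      have h2 : 0 ≤ (if Fin.last (n + 1) ∈ t' then v (Fin.last (n + 1)) else 0) := by
        split
        · exact hv0 _ ‹_›
        · exact le_refl 0
      have := hxc1.symm.trans hxc2
      linarith
    have hw00 : ∀ i ∈ t, i = 0 → w i = 0 := by
      rintro i hi rfl
      rw [if_pos hi] at hS0
      exact hS0
    set u : Fin (n + 1) → (Fin (n + 2) → ℝ) := fun k => s.vert k.succ with hu
    set z : Fin (n + 2) → (Fin (n + 2) → ℝ) := fun i => if i = 0 then u 0 else s.vert i
        with hz
    have hzmem : ∀ i, z i ∈ Set.range u := by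
      intro i
      rcases eq_or_ne i 0 with rfl | h
      · exact ⟨0, by simp [hz]⟩
      · obtain ⟨j, rfl⟩ := Fin.exists_succ_eq.mpr h
        exact ⟨j, by simp [hz, hu, Fin.succ_ne_zero]⟩
    have hxz : x = ∑ i ∈ t, w i • z i := by
      rw [hxsum]
      refine Finset.sum_congr rfl fun i hi => ?_
      rcases eq_or_ne i 0 with rfl | h
      · rw [hw00 _ hi rfl]; simp
      · simp [hz, h]
    rw [hxz]
    exact (convex_convexHull ℝ _).sum_mem hw0 hw1
      (fun i _ => subset_convexHull ℝ _ (hzmem i))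
  · refine Set.subset_inter ?_ ?_ <;> rw [Slant.simplex] <;> apply convexHull_mono <;>
      rintro _ ⟨k, rfl⟩
    · exact ⟨k.succ, rfl⟩
    · exact ⟨k.castSucc, sD_vert_eq s k⟩
end
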